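/- Let n ≥ 3 and k ≥ 2 be even, and for 1 ≤ i ≤ n-1 define Qⁿ_{k,i} = Pⁿₖ + ((n-1-i)/((k-1)(k+n-1)))·A₁Pⁿₖ and mⁿ_{k,i} = min over [-1,1] of Qⁿ_{k,i}. Then the sequence (mⁿ_{k,i})_{i=1}^{n-1} is strictly increasing: mⁿ_{k,1} < mⁿ_{k,2} < ⋯ < mⁿ_{k,n-1}. -/

import Mathlib

open Polynomial Set Filter Topology

section LegendreAux


/-- Core real-arithmetic lemma: at an interior critical point of `Q_c` with value `m < 0`,
the quantity `A = p - s*d` is negative. -/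
lemma core_A_neg (N J K c s p d e m p0 : ℝ)
    (hJ1 : 1 ≤ J) (hJN : J ≤ N) (hK : 0 < K)
    (hcK : c * K = c * N + (N - J))
    (hc : 0 ≤ c) (hs : s ^ 2 < 1)
    (ode : (1 - s ^ 2) * e = N * s * d - K * p)
    (crit : d = c * s * e)
    (hm : m = p + c * (p - s * d))
    (hmin : m ≤ (1 + c) * p0)
    (hp0 : p0 < 0) (hpp : p0 ≤ p) :
    p - s * d < 0 := by
  have hN : 1 ≤ N := le_trans hJ1 hJN
  have hm0 : m < 0 := lt_of_le_of_lt hmin (by nlinarith)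
  have hs0 : 0 ≤ s ^ 2 := sq_nonneg s
  set D : ℝ := 1 - s ^ 2 - N * c * s ^ 2 with hD
  have hDm : D * m = p * ((1 + c) - s ^ 2 * (1 + c * (J + 1))) := by
    linear_combination D * hm + (-(c * s * D) - c ^ 2 * s ^ 3 * N) * crit
      + (-(c ^ 2 * s ^ 2)) * ode + (c * s ^ 2 * p) * hcK
  have hDA : D * (p - s * d) = p * (1 + (N - J - 1) * s ^ 2) := by
    linear_combination (-(s * D) - c * s ^ 3 * N) * crit + (-(c * s ^ 2)) * ode
      + (s ^ 2 * p) * hcK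
  have h1pos : 0 < 1 + (N - J - 1) * s ^ 2 := by nlinarith
  rcases lt_trichotomy D 0 with hD0 | hD0 | hD0
  · -- D < 0
    have hc0 : 0 < c := by
      by_contra h
      push_neg at h
      have : 0 ≤ N * (-c) * s ^ 2 := mul_nonneg (mul_nonneg (by linarith) (by linarith)) hs0
      nlinarith
    rcases lt_trichotomy p 0 with hp | hp | hp
    · -- p < 0 : contradiction with global minimality
      exfalso
      have hED : D * (m - p) = p * (c * (1 + (N - J - 1) * s ^ 2)) := by
        linear_combination hDm
      have hmp : p ≤ m := by nlinarith [mul_pos hc0 h1pos]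
      nlinarith
    · -- p = 0
      exfalso
      have he : e = 0 := by
        have : D * e = -(K * p) := by linear_combination ode + N * s * crit
        rw [hp] at this
        have : D * e = 0 := by linarith [this]
        exact (mul_eq_zero.1 this).resolve_left (ne_of_lt hD0)
      have : m = 0 := by rw [hm, crit, he, hp]; ring
      linarith
    · -- p > 0 : A < 0 directly
      by_contra h
      push_neg at h
      nlinarith [mul_nonpos_of_nonpos_of_nonneg hD0.le h, mul_pos hp h1pos]
  · -- D = 0
    have hp : p = 0 := by
      have h2 : D * e = -(K * p) := by linear_combination ode + N * s * crit
      rw [hD0] at h2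
      have : K * p = 0 := by linarith
      rcases mul_eq_zero.1 this with h | h
      · exact absurd h (ne_of_gt hK)
      · exact h
    have hmsd : m = -(c * (s * d)) := by rw [hm, hp]; ring
    have hsd : 0 < c * (s * d) := by linarith
    rcases mul_pos_iff.1 hsd with ⟨_, h2⟩ | ⟨h1, _⟩
    · rw [hp]; linarith
    · linarith
  · -- D > 0
    have hE : 0 < (1 + c) - s ^ 2 * (1 + c * (J + 1)) := by
      nlinarith [mul_nonneg (mul_nonneg hc hs0) (sub_nonneg.2 hJN),
        mul_nonneg (mul_nonneg (mul_nonneg hc hc) hs0) (le_trans zero_le_one hN),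
        mul_pos hD0 (show (0:ℝ) < 1 + c by linarith)]
    have h2 : p * ((1 + c) - s ^ 2 * (1 + c * (J + 1))) < 0 := by
      rw [← hDm]; exact mul_neg_of_pos_of_neg hD0 hm0
    have hp : p < 0 := by
      by_contra h
      push_neg at h
      exact absurd h2 (not_lt.2 (mul_nonneg h hE.le))
    have h3 : D * (p - s * d) < 0 := by
      rw [hDA]; exact mul_neg_of_neg_of_pos hp h1pos
    by_contra h
    push_neg at h
    exact absurd h3 (not_lt.2 (mul_nonneg hD0.le h))


lemma deg_eq (n : ℕ) (K : ℝ) (w : ℝ[X]) (hw : w ≠ 0)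
    (h : (1 - X ^ 2) * derivative (derivative w) - C ((n:ℝ) - 1) * (X * derivative w)
      + C K * w = 0) :
    K = (w.natDegree : ℝ) * ((w.natDegree : ℝ) + (n : ℝ) - 2) := by
  obtain ⟨m, hm⟩ : ∃ m, w.natDegree = m := ⟨_, rfl⟩
  have hlc : w.coeff m ≠ 0 := by rw [← hm, ← leadingCoeff]; exact mt leadingCoeff_eq_zero.1 hw
  have hsplit : (1 - X ^ 2) * derivative (derivative w) =
      derivative (derivative w) - X ^ 2 * derivative (derivative w) := by ring
  rw [hsplit] at h
  have hcoeff := congrArg (fun p => Polynomial.coeff p m) h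
  simp only [coeff_add, coeff_sub, coeff_zero, coeff_C_mul] at hcoeff
  have hdd : (derivative (derivative w)).coeff m = 0 := by
    rw [coeff_derivative, coeff_derivative, coeff_eq_zero_of_natDegree_lt (by omega), zero_mul,
      zero_mul]
  rw [hm]
  rcases m with _ | m
  · -- m = 0
    have h1 : (X ^ 2 * derivative (derivative w)).coeff 0 = 0 := by
      rw [mul_coeff_zero, coeff_X_pow]; norm_num
    have h2 : (X * derivative w).coeff 0 = 0 := by
      rw [mul_coeff_zero, coeff_X_zero, zero_mul]
    rw [hdd, h1, h2, mul_zero] at hcoeff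
    have : K = 0 := by
      rcases mul_eq_zero.1 (by linarith [hcoeff] : K * w.coeff 0 = 0) with h | h
      · exact h
      · exact absurd h hlc
    rw [this]; norm_num
  rcases m with _ | m
  · -- m = 1
    have h1 : (X ^ 2 * derivative (derivative w)).coeff 1 = 0 := by
      have e : X ^ 2 * derivative (derivative w) = X * (X * derivative (derivative w)) := by ring
      rw [e, coeff_X_mul, mul_coeff_zero, coeff_X_zero, zero_mul]
    have h2 : (X * derivative w).coeff 1 = w.coeff 1 * 1 := by
      rw [coeff_X_mul, coeff_derivative]; norm_num
    rw [hdd, h1, h2] at hcoeff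
    have key : w.coeff 1 * (K - ((n:ℝ) - 1)) = 0 := by
      have := hcoeff; push_cast at this ⊢; linear_combination this
    rcases mul_eq_zero.1 key with h | h
    · exact absurd h hlc
    · push_cast; linarith [h]
  · -- m = m + 2
    have h1 : (X ^ 2 * derivative (derivative w)).coeff (m + 2) =
        w.coeff (m + 2) * ((m:ℝ) + 2) * ((m:ℝ) + 1) := by
      rw [coeff_X_pow_mul, coeff_derivative, coeff_derivative]
      push_cast; ring
    have h2 : (X * derivative w).coeff (m + 2) = w.coeff (m + 2) * ((m:ℝ) + 2) := by
      have e : m + 2 = (m + 1) + 1 := by omega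
      rw [e, coeff_X_mul, coeff_derivative]
      push_cast; ring
    rw [hdd, h1, h2] at hcoeff
    have key : w.coeff (m + 2) *
        (K - ((m:ℝ) + 2) * (((m:ℝ) + 2) + (n:ℝ) - 2)) = 0 := by
      push_cast at hcoeff ⊢; linear_combination hcoeff
    rcases mul_eq_zero.1 key with h | h
    · exact absurd h hlc
    · push_cast; linarith [h]

lemma no_double_root (n : ℕ) (K : ℝ) (q : ℝ[X]) (hq0 : q ≠ 0)
    (hR : (1 - X ^ 2) * derivative (derivative q)
      - C ((n:ℝ) - 1) * (X * derivative q) + C K * q = 0)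
    (a : ℝ) (ha : a ^ 2 < 1) (h0 : q.eval a = 0) (h1 : (derivative q).eval a = 0) :
    False := by
  have h2 : (X - C a) ^ 2 ∣ q := by
    obtain ⟨g1, hg1⟩ := dvd_iff_isRoot.2 h0
    have hg1a : g1.eval a = 0 := by
      have hder := congrArg derivative hg1
      rw [derivative_mul] at hder
      have := congrArg (eval a) hder
      simp [h1] at this
      simpa using this.symm
    obtain ⟨g2, hg2⟩ := dvd_iff_isRoot.2 hg1a
    exact ⟨g2, by rw [hg1, hg2]; ring⟩
  have hr2 : 2 ≤ q.rootMultiplicity a := (le_rootMultiplicity_iff hq0).2 h2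
  obtain ⟨r', hr'⟩ : ∃ r', q.rootMultiplicity a = r' + 2 :=
    ⟨q.rootMultiplicity a - 2, by omega⟩
  set g : ℝ[X] := q /ₘ (X - C a) ^ q.rootMultiplicity a with hg
  have hga : g.eval a ≠ 0 := eval_divByMonic_pow_rootMultiplicity_ne_zero a hq0
  have hfac : q = (X - C a) ^ (r' + 2) * g := by
    rw [hg, ← hr']
    exact (pow_mul_divByMonic_rootMultiplicity_eq q a).symm
  have hq1 : derivative q
      = C ((r':ℝ) + 2) * (X - C a) ^ (r' + 1) * g + (X - C a) ^ (r' + 2) * derivative g := by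
    conv_lhs => rw [hfac]
    rw [derivative_mul, derivative_pow]
    simp only [Nat.add_sub_cancel, derivative_sub, derivative_X, derivative_C, sub_zero, mul_one]
    push_cast
    ring
  have hq2 : derivative (derivative q)
      = C ((r':ℝ) + 2) * (C ((r':ℝ) + 1) * (X - C a) ^ r' * g)
        + C ((r':ℝ) + 2) * (X - C a) ^ (r' + 1) * derivative g
        + (C ((r':ℝ) + 2) * (X - C a) ^ (r' + 1) * derivative g
          + (X - C a) ^ (r' + 2) * derivative (derivative g)) := by
    rw [hq1]
    rw [derivative_add, derivative_mul, derivative_mul, derivative_mul, derivative_pow,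
      derivative_pow]
    simp only [Nat.add_sub_cancel, derivative_sub, derivative_X, derivative_C, sub_zero, mul_one]
    push_cast
    ring
  set H : ℝ[X] :=
    (1 - X ^ 2) * (C ((r':ℝ) + 2) * (C ((r':ℝ) + 1) * g)
      + C ((r':ℝ) + 2) * ((X - C a) * derivative g) * 2 + (X - C a) ^ 2 * derivative (derivative g))
    - C ((n:ℝ) - 1) * (X * (C ((r':ℝ) + 2) * ((X - C a) * g) + (X - C a) ^ 2 * derivative g))
    + C K * ((X - C a) ^ 2 * g) with hH
  have hkey : (X - C a) ^ r' * H = 0 := by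
    rw [← hR, hq2, hq1, hH]
    conv_rhs => rw [hfac]
    ring
  have hyne : (X - C a : ℝ[X]) ^ r' ≠ 0 := pow_ne_zero _ (X_sub_C_ne_zero a)
  have hH0 : H = 0 := by
    rcases mul_eq_zero.1 hkey with h | h
    · exact absurd h hyne
    · exact h
  have hev := congrArg (eval a) hH0
  rw [hH] at hev
  simp only [eval_add, eval_sub, eval_mul, eval_pow, eval_one, eval_X, eval_C, eval_zero,
    eval_ofNat, sub_self, zero_mul, mul_zero, zero_pow, add_zero, zero_add] at hev
  -- hev : (1 - a^2) * ((r'+2) * ((r'+1) * g.eval a)) = 0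
  norm_num at hev
  have hr1 : (0:ℝ) < (r':ℝ) + 1 := by positivity
  have hr2' : (0:ℝ) < (r':ℝ) + 2 := by positivity
  have h1a : (0:ℝ) < 1 - a ^ 2 := by linarith
  rcases hev with h | h | h | h
  · linarith
  · linarith
  · linarith
  · exact hga h

lemma parity (n k : ℕ) (hn : 3 ≤ n) (hk : 2 ≤ k) (hke : Even k) (q : ℝ[X])
    (hR : (1 - X ^ 2) * derivative (derivative q)
      - C ((n:ℝ) - 1) * (X * derivative q)
      + C ((k:ℝ) * ((k:ℝ) + (n:ℝ) - 2)) * q = 0) :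
    q.comp (-X) = q := by
  set K : ℝ := (k:ℝ) * ((k:ℝ) + (n:ℝ) - 2) with hK
  set O : ℝ[X] := q - q.comp (-X) with hO
  -- derivative facts for composition with -X
  have hd : ∀ p : ℝ[X], derivative (p.comp (-X)) = -((derivative p).comp (-X)) := by
    intro p
    rw [derivative_comp]
    simp
  have hOev : ∀ t : ℝ, O.eval t = q.eval t - q.eval (-t) := by
    intro t; simp [hO, eval_comp]
  have hO1 : ∀ t : ℝ, (derivative O).eval t = (derivative q).eval t + (derivative q).eval (-t) := by
    intro t
    rw [hO]
    simp [derivative_sub, hd q, eval_comp]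
  have hO2 : ∀ t : ℝ, (derivative (derivative O)).eval t
      = (derivative (derivative q)).eval t - (derivative (derivative q)).eval (-t) := by
    intro t
    rw [hO]
    simp [derivative_sub, hd, eval_comp]
    ring
  have hRO : (1 - X ^ 2) * derivative (derivative O)
      - C ((n:ℝ) - 1) * (X * derivative O) + C K * O = 0 := by
    apply Polynomial.funext
    intro t
    have h1 := congrArg (eval t) hR
    have h2 := congrArg (eval (-t)) hR
    simp only [eval_add, eval_sub, eval_mul, eval_one, eval_pow, eval_X, eval_C,
      eval_zero] at h1 h2 ⊢
    rw [hOev, hO1, hO2]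
    nlinarith [h1, h2]
  by_contra hOne
  have hOne' : O ≠ 0 := fun h => hOne (sub_eq_zero.1 (hO ▸ h)).symm
  have hdeg := deg_eq n K O hOne' hRO
  -- O.natDegree = k
  have hnk : O.natDegree = k := by
    have h3 : ((O.natDegree : ℝ) - (k:ℝ)) * ((O.natDegree : ℝ) + (k:ℝ) + (n:ℝ) - 2) = 0 := by
      linear_combination -hdeg
    have hn' : (3:ℝ) ≤ (n:ℝ) := by exact_mod_cast hn
    have hk' : (2:ℝ) ≤ (k:ℝ) := by exact_mod_cast hk
    have hd0 : (0:ℝ) ≤ (O.natDegree : ℝ) := Nat.cast_nonneg _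
    have hpos : (0:ℝ) < (O.natDegree : ℝ) + (k:ℝ) + (n:ℝ) - 2 := by linarith
    rcases mul_eq_zero.1 h3 with h | h
    · have hcast : (O.natDegree : ℝ) = (k:ℝ) := by linarith
      exact_mod_cast hcast
    · linarith
  -- O is odd: O.comp(-X) = -O
  have hOodd : O.comp (-X) = -O := by
    rw [hO, sub_comp, comp_assoc]
    simp [neg_comp, X_comp]
  have hL : -O.leadingCoeff = O.leadingCoeff := by
    have hlcc := leadingCoeff_comp (p := O) (q := -X) (by simp : (-X : ℝ[X]).natDegree ≠ 0)
    rw [hOodd, hnk] at hlcc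
    simpa [Even.neg_one_pow hke] using hlcc
  have hL0 : O.leadingCoeff = 0 := by linarith
  exact hOne' (leadingCoeff_eq_zero.1 hL0)

lemma interior_min (n k : ℕ) (hn : 3 ≤ n) (hk : 2 ≤ k) (q : ℝ[X])
    (hR : (1 - X ^ 2) * derivative (derivative q)
      - C ((n:ℝ) - 1) * (X * derivative q)
      + C ((k:ℝ) * ((k:ℝ) + (n:ℝ) - 2)) * q = 0)
    (hq1 : q.eval 1 = 1) (hqm1 : q.eval (-1) = 1) :
    ∃ t₀ ∈ Set.Ioo (-1:ℝ) 1, (derivative q).eval t₀ = 0 ∧ q.eval t₀ < 0 ∧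
      ∀ t ∈ Set.Icc (-1:ℝ) 1, q.eval t₀ ≤ q.eval t := by
  have hn' : (3:ℝ) ≤ (n:ℝ) := by exact_mod_cast hn
  have hk' : (2:ℝ) ≤ (k:ℝ) := by exact_mod_cast hk
  set K : ℝ := (k:ℝ) * ((k:ℝ) + (n:ℝ) - 2) with hK
  have hKpos : 0 < K := by rw [hK]; nlinarith
  have hq0 : q ≠ 0 := fun h => by simp [h] at hq1
  -- derivative at the endpoints
  have hd1 : ((n:ℝ) - 1) * (derivative q).eval 1 = K := by
    have := congrArg (eval 1) hR
    simp only [eval_add, eval_sub, eval_mul, eval_one, eval_pow, eval_X, eval_C, eval_zero] at this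
    rw [hq1] at this
    linarith
  have hdm1 : ((n:ℝ) - 1) * (derivative q).eval (-1) = -K := by
    have := congrArg (eval (-1)) hR
    simp only [eval_add, eval_sub, eval_mul, eval_one, eval_pow, eval_X, eval_C, eval_zero] at this
    rw [hqm1] at this
    nlinarith [this]
  have hd1pos : 0 < (derivative q).eval 1 := by nlinarith
  have hdm1neg : (derivative q).eval (-1) < 0 := by nlinarith
  -- global minimizer on Icc
  obtain ⟨t₀, ht₀, hmin⟩ := isCompact_Icc.exists_isMinOn (Set.nonempty_Icc.2 (by norm_num))
    (q.continuous.continuousOn : ContinuousOn (fun x => eval x q) (Set.Icc (-1:ℝ) 1))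
  have hminle : ∀ t ∈ Set.Icc (-1:ℝ) 1, q.eval t₀ ≤ q.eval t := fun t ht => hmin ht
  -- t₀ ≠ 1
  have hne1 : t₀ ≠ 1 := by
    intro h
    subst h
    obtain ⟨g, hg⟩ := dvd_iff_isRoot.2 (show (q - C 1).IsRoot 1 by simp [IsRoot, hq1])
    have hg1 : g.eval 1 = (derivative q).eval 1 := by
      have hder := congrArg derivative hg
      rw [derivative_sub, derivative_C, sub_zero, derivative_mul] at hder
      have := congrArg (eval 1) hder
      simp at this
      linarith
    have hgpos : 0 < g.eval 1 := hg1 ▸ hd1pos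
    have ev1 : ∀ᶠ t in 𝓝[<] (1:ℝ), 0 < g.eval t :=
      ((isOpen_lt continuous_const g.continuous).eventually_mem hgpos).filter_mono
        nhdsWithin_le_nhds
    have ev2 : ∀ᶠ t in 𝓝[<] (1:ℝ), t ∈ Set.Ioo (0:ℝ) 1 :=
      Ioo_mem_nhdsLT_of_mem ⟨zero_lt_one, le_refl 1⟩
    obtain ⟨t, h1t, h2t⟩ := (ev1.and ev2).exists
    have hqt : q.eval t - 1 = (t - 1) * g.eval t := by
      have := congrArg (eval t) hg
      simp at this
      linarith
    have : q.eval t < 1 := by nlinarith [mul_neg_of_neg_of_pos (show t - 1 < 0 by linarith [h2t.2]) h1t]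
    have := hminle t ⟨by linarith [h2t.1], le_of_lt h2t.2⟩
    rw [hq1] at this
    linarith
  -- t₀ ≠ -1
  have hnem1 : t₀ ≠ -1 := by
    intro h
    subst h
    obtain ⟨g, hg⟩ := dvd_iff_isRoot.2 (show (q - C 1).IsRoot (-1) by simp [IsRoot, hqm1])
    have hg1 : g.eval (-1) = (derivative q).eval (-1) := by
      have hder := congrArg derivative hg
      rw [derivative_sub, derivative_C, sub_zero, derivative_mul] at hder
      have := congrArg (eval (-1)) hder
      simp at this
      linarith
    have hgneg : g.eval (-1) < 0 := hg1 ▸ hdm1neg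
    have ev1 : ∀ᶠ t in 𝓝[>] (-1:ℝ), g.eval t < 0 :=
      ((isOpen_lt g.continuous continuous_const).eventually_mem hgneg).filter_mono
        nhdsWithin_le_nhds
    have ev2 : ∀ᶠ t in 𝓝[>] (-1:ℝ), t ∈ Set.Ioo (-1:ℝ) 0 :=
      Ioo_mem_nhdsGT_of_mem ⟨le_refl _, by norm_num⟩
    obtain ⟨t, h1t, h2t⟩ := (ev1.and ev2).exists
    have hqt : q.eval t - 1 = (t - (-1)) * g.eval t := by
      have := congrArg (eval t) hg
      simp at this
      linarith
    have : q.eval t < 1 := by nlinarith [mul_neg_of_pos_of_neg (show 0 < t - (-1) by linarith [h2t.1]) h1t]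
    have := hminle t ⟨le_of_lt h2t.1, by linarith [h2t.2]⟩
    rw [hqm1] at this
    linarith
  have ht₀Ioo : t₀ ∈ Set.Ioo (-1:ℝ) 1 :=
    ⟨lt_of_le_of_ne ht₀.1 (Ne.symm hnem1), lt_of_le_of_ne ht₀.2 hne1⟩
  -- first-order condition
  have hd0 : (derivative q).eval t₀ = 0 := by
    have hloc : IsLocalMin (fun x => eval x q) t₀ :=
      hmin.isLocalMin (Icc_mem_nhds ht₀Ioo.1 ht₀Ioo.2)
    have := hloc.deriv_eq_zero
    rwa [Polynomial.deriv] at this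
  refine ⟨t₀, ht₀Ioo, hd0, ?_, hminle⟩
  -- show q.eval t₀ < 0
  set p₀ : ℝ := q.eval t₀ with hp₀
  have ht₀sq : t₀ ^ 2 < 1 := by nlinarith [ht₀Ioo.1, ht₀Ioo.2]
  rcases lt_trichotomy p₀ 0 with h | h | h
  · exact h
  · exact absurd (no_double_root n K q hq0 hR t₀ ht₀sq (h ▸ rfl) hd0) id
  · -- p₀ > 0 : contradiction
    exfalso
    have he₀ : (1 - t₀ ^ 2) * (derivative (derivative q)).eval t₀ = -(K * p₀) := by
      have := congrArg (eval t₀) hR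
      simp only [eval_add, eval_sub, eval_mul, eval_one, eval_pow, eval_X, eval_C,
        eval_zero] at this
      rw [hd0] at this
      linarith [this]
    have he₀neg : (derivative (derivative q)).eval t₀ < 0 := by
      nlinarith [he₀, mul_pos hKpos h]
    -- double root factorization of q - C p₀
    obtain ⟨g1, hg1⟩ := dvd_iff_isRoot.2 (show (q - C p₀).IsRoot t₀ by simp [IsRoot, hp₀])
    have hg1a : g1.eval t₀ = 0 := by
      have hder := congrArg derivative hg1
      rw [derivative_sub, derivative_C, sub_zero, derivative_mul] at hder
      have := congrArg (eval t₀) hder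
      simp [hd0] at this
      linarith
    obtain ⟨w, hw⟩ := dvd_iff_isRoot.2 hg1a
    have hfac : q = (X - C t₀) ^ 2 * w + C p₀ := by
      have : q - C p₀ = (X - C t₀) ^ 2 * w := by rw [hg1, hw]; ring
      linear_combination this
    have hD1 : derivative q = C 2 * ((X - C t₀) * w) + (X - C t₀) ^ 2 * derivative w := by
      conv_lhs => rw [hfac]
      rw [derivative_add, derivative_C, add_zero, derivative_mul, derivative_pow]
      simp only [derivative_sub, derivative_X, derivative_C, sub_zero, mul_one, Nat.cast_ofNat]
      norm_num
      ring
    have hwt₀ : (derivative (derivative q)).eval t₀ = 2 * w.eval t₀ := by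
      have h2 := congrArg derivative hD1
      simp only [derivative_add, derivative_mul, derivative_pow, derivative_C, derivative_sub,
        derivative_X] at h2
      have h3 := congrArg (eval t₀) h2
      simp at h3
      linarith [h3]
    have hwneg : w.eval t₀ < 0 := by linarith [hwt₀ ▸ he₀neg]
    have ev1 : ∀ᶠ t in 𝓝[≠] t₀, w.eval t < 0 :=
      ((isOpen_lt w.continuous continuous_const).eventually_mem hwneg).filter_mono
        nhdsWithin_le_nhds
    have ev2 : ∀ᶠ t in 𝓝[≠] t₀, t ∈ Set.Ioo (-1:ℝ) 1 :=
      (isOpen_Ioo.eventually_mem ht₀Ioo).filter_mono nhdsWithin_le_nhds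
    have ev3 : ∀ᶠ t in 𝓝[≠] t₀, t ≠ t₀ := eventually_mem_nhdsWithin
    obtain ⟨t, ⟨h1t, h2t⟩, h3t⟩ := ((ev1.and ev2).and ev3).exists
    have hqt : q.eval t - p₀ = (t - t₀) ^ 2 * w.eval t := by
      have := congrArg (eval t) hfac
      simp at this
      linarith
    have h3t' : t ≠ t₀ := h3t
    have htne : t - t₀ ≠ 0 := sub_ne_zero.2 h3t'
    have hsq : 0 < (t - t₀) ^ 2 := by positivity
    have hlt : q.eval t < p₀ := by linarith [mul_neg_of_pos_of_neg hsq h1t, hqt]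
    exact absurd (hminle t ⟨le_of_lt h2t.1, le_of_lt h2t.2⟩) (not_le.2 hlt)

end LegendreAux

/-- `p` is the Legendre polynomial of dimension `n` and degree `k`: it is a polynomial
function, normalized by `p 1 = 1`, satisfying the Legendre ODE
`(1-t²)y'' - (n-1)t·y' + k(k+n-2)y = 0`. -/
def IsLegendre (n k : ℕ) (p : ℝ → ℝ) : Prop :=
  (∃ q : Polynomial ℝ, ∀ t, p t = q.eval t) ∧ p 1 = 1 ∧
    ∀ t : ℝ, (1 - t ^ 2) * iteratedDeriv 2 p t - ((n : ℝ) - 1) * t * deriv p t +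
      (k : ℝ) * ((k : ℝ) + (n : ℝ) - 2) * p t = 0

/-- For even `k ≥ 2`, setting
`Qⁿ_{k,i} = Pⁿₖ + ((n-1-i)/((k-1)(k+n-1)))·A₁Pⁿₖ` and
`mⁿ_{k,i} = min_{[-1,1]} Qⁿ_{k,i}`, the sequence `(mⁿ_{k,i})_{i=1}^{n-1}` is
strictly increasing. -/
theorem min_Q_strict_mono (n k : ℕ) (hn : 3 ≤ n) (hk : 2 ≤ k) (hke : Even k)
    (P : ℝ → ℝ) (hP : IsLegendre n k P) :
    ∀ i : ℕ, 1 ≤ i → i + 1 ≤ n - 1 →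
      sInf ((fun t => P t +
          (((n : ℝ) - 1 - (i : ℝ)) / (((k : ℝ) - 1) * ((k : ℝ) + (n : ℝ) - 1))) *
            (P t - t * deriv P t)) '' Set.Icc (-1 : ℝ) 1) <
        sInf ((fun t => P t +
          (((n : ℝ) - 1 - ((i : ℝ) + 1)) / (((k : ℝ) - 1) * ((k : ℝ) + (n : ℝ) - 1))) *
            (P t - t * deriv P t)) '' Set.Icc (-1 : ℝ) 1) := by
  intro i hi1 hin
  obtain ⟨⟨q, hq⟩, hP1, hODE⟩ := hP
  have hPfun : P = fun t => q.eval t := funext hq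
  subst hPfun
  simp only [Polynomial.deriv]
  have hn' : (3:ℝ) ≤ (n:ℝ) := by exact_mod_cast hn
  have hk' : (2:ℝ) ≤ (k:ℝ) := by exact_mod_cast hk
  have hi' : (i:ℝ) + 2 ≤ (n:ℝ) - 1 + 1 := by
    have : i + 2 ≤ n := by omega
    have := (Nat.cast_le (α := ℝ)).2 this
    push_cast at this ⊢
    linarith
  have hq1 : q.eval 1 = 1 := by simpa using hP1
  set K : ℝ := (k:ℝ) * ((k:ℝ) + (n:ℝ) - 2) with hK
  have hKpos : 0 < K := by rw [hK]; nlinarith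
  -- polynomial ODE
  have hdf : deriv (fun x : ℝ => eval x q) = fun x => eval x (derivative q) :=
    funext fun x => Polynomial.deriv q
  have hR : (1 - X ^ 2) * derivative (derivative q)
      - C ((n:ℝ) - 1) * (X * derivative q) + C K * q = 0 := by
    apply Polynomial.funext
    intro t
    have h := hODE t
    rw [iteratedDeriv_succ, iteratedDeriv_succ, iteratedDeriv_zero, hdf] at h
    rw [Polynomial.deriv] at h
    simp only at h
    simp only [eval_add, eval_sub, eval_mul, eval_one, eval_pow, eval_X, eval_C, eval_zero]
    rw [hK]
    linear_combination h
  -- evenness and value at -1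
  have hqm1 : q.eval (-1) = 1 := by
    have hpar := parity n k hn hk hke q hR
    have := congrArg (eval 1) hpar
    simp [eval_comp] at this
    rw [this]
    exact hq1
  -- derivative at endpoints
  have hd1 : ((n:ℝ) - 1) * (derivative q).eval 1 = K := by
    have := congrArg (eval 1) hR
    simp only [eval_add, eval_sub, eval_mul, eval_one, eval_pow, eval_X, eval_C, eval_zero] at this
    rw [hq1] at this
    linarith
  have hdm1 : ((n:ℝ) - 1) * (derivative q).eval (-1) = -K := by
    have := congrArg (eval (-1)) hR
    simp only [eval_add, eval_sub, eval_mul, eval_one, eval_pow, eval_X, eval_C, eval_zero] at this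
    rw [hqm1] at this
    nlinarith [this]
  -- interior global minimum of P
  obtain ⟨t₀, ht₀Ioo, hd₀, hp₀neg, hp₀min⟩ := interior_min n k hn hk q hR hq1 hqm1
  -- the two coefficients
  set dnm : ℝ := ((k:ℝ) - 1) * ((k:ℝ) + (n:ℝ) - 1) with hdnm
  have hdnmpos : 0 < dnm := by rw [hdnm]; nlinarith
  set c2 : ℝ := ((n:ℝ) - 1 - ((i:ℝ) + 1)) / dnm with hc2
  set c1 : ℝ := ((n:ℝ) - 1 - (i:ℝ)) / dnm with hc1
  have hc2K : c2 * dnm = (n:ℝ) - 1 - ((i:ℝ) + 1) := by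
    rw [hc2]; exact div_mul_cancel₀ _ (ne_of_gt hdnmpos)
  have hc2nn : 0 ≤ c2 := by
    apply div_nonneg _ hdnmpos.le
    linarith
  have hδ : c1 = c2 + 1/dnm := by
    rw [hc1, hc2, ← add_div]
    congr 1
    ring
  have hδpos : 0 < 1/dnm := by positivity
  -- continuity of the two functions
  have cont : ∀ c : ℝ, Continuous (fun t : ℝ =>
      eval t q + c * (eval t q - t * eval t (derivative q))) := fun c =>
    (q.continuous).add (continuous_const.mul ((q.continuous).sub
      (continuous_id.mul ((derivative q).continuous))))
  -- minimizer of the lower-index function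
  obtain ⟨s, hsIcc, hsmin⟩ := isCompact_Icc.exists_isMinOn (Set.nonempty_Icc.2 (by norm_num))
    ((cont c2).continuousOn :
      ContinuousOn (fun t => eval t q + c2 * (eval t q - t * eval t (derivative q)))
        (Set.Icc (-1:ℝ) 1))
  set g₂ : ℝ → ℝ := fun t => eval t q + c2 * (eval t q - t * eval t (derivative q)) with hg₂
  set m : ℝ := g₂ s with hm
  have hminle : ∀ t ∈ Set.Icc (-1:ℝ) 1, m ≤ g₂ t := fun t ht => hsmin ht
  have hKd : K = ((n:ℝ) - 1) + dnm := by rw [hK, hdnm]; ring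
  clear_value K dnm c2 c1 m
  -- m ≤ (1+c2) * p₀ < 0
  have hmq : m ≤ (1 + c2) * q.eval t₀ := by
    have := hminle t₀ ⟨ht₀Ioo.1.le, ht₀Ioo.2.le⟩
    rw [hg₂] at this
    simp only at this
    rw [hd₀] at this
    linarith [this]
  have hm0 : m < 0 := lt_of_le_of_lt hmq (by nlinarith)
  -- endpoint values are positive
  have hg21 : ((n:ℝ) - 1) * g₂ 1 = (i:ℝ) + 1 := by
    rw [hg₂]
    simp only [eval_one, one_mul]
    rw [hq1]
    linear_combination (-c2) * hd1 - hc2K - c2 * hKd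
  have hg2m1 : ((n:ℝ) - 1) * g₂ (-1) = (i:ℝ) + 1 := by
    rw [hg₂]
    simp only
    rw [hqm1]
    linear_combination c2 * hdm1 - hc2K - c2 * hKd
  have hn1 : (0:ℝ) < (n:ℝ) - 1 := by linarith
  have hi0 : (0:ℝ) < (i:ℝ) + 1 := by positivity
  have hg21pos : 0 < g₂ 1 := by
    by_contra hcon
    push_neg at hcon
    have := mul_nonneg hn1.le (neg_nonneg.2 hcon)
    linarith [hg21]
  have hg2m1pos : 0 < g₂ (-1) := by
    by_contra hcon
    push_neg at hcon
    have := mul_nonneg hn1.le (neg_nonneg.2 hcon)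
    linarith [hg2m1]
  -- s is interior
  have hsne1 : s ≠ 1 := by
    intro h
    have heq : m = g₂ 1 := by rw [hm, h]
    linarith
  have hsnem1 : s ≠ -1 := by
    intro h
    have heq : m = g₂ (-1) := by rw [hm, h]
    linarith
  have hsIoo : s ∈ Set.Ioo (-1:ℝ) 1 :=
    ⟨lt_of_le_of_ne hsIcc.1 (Ne.symm hsnem1), lt_of_le_of_ne hsIcc.2 hsne1⟩
  obtain ⟨hsl, hsr⟩ := hsIoo
  have hsIoo : s ∈ Set.Ioo (-1:ℝ) 1 := ⟨hsl, hsr⟩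
  have hssq : s ^ 2 < 1 := by
    rw [← sq_abs]
    exact pow_lt_one₀ (abs_nonneg s) (abs_lt.2 ⟨hsl, hsr⟩) (by norm_num)
  -- first-order condition at s
  have hdQ : derivative (q + C c2 * (q - X * derivative q))
      = derivative q - C c2 * (X * derivative (derivative q)) := by
    rw [derivative_add, derivative_mul, derivative_C, derivative_sub, derivative_mul,
      derivative_X]
    ring
  have hgev : g₂ = fun t => eval t (q + C c2 * (q - X * derivative q)) := by
    funext t
    rw [hg₂]
    simp
  have hcrit : eval s (derivative q) = c2 * s * eval s (derivative (derivative q)) := by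
    have hloc : IsLocalMin g₂ s := hsmin.isLocalMin (Icc_mem_nhds hsIoo.1 hsIoo.2)
    rw [hgev] at hloc
    have := hloc.deriv_eq_zero
    rw [Polynomial.deriv, hdQ] at this
    simp only [eval_sub, eval_mul, eval_C, eval_X] at this
    linarith [this]
  -- ODE at s
  have hodes : (1 - s ^ 2) * eval s (derivative (derivative q))
      = ((n:ℝ) - 1) * s * eval s (derivative q) - K * eval s q := by
    have := congrArg (eval s) hR
    simp only [eval_add, eval_sub, eval_mul, eval_one, eval_pow, eval_X, eval_C, eval_zero] at this
    linarith [this]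
  -- the key negativity
  have hA : eval s q - s * eval s (derivative q) < 0 := by
    apply core_A_neg ((n:ℝ) - 1) ((i:ℝ) + 1) K c2 s (eval s q)
      (eval s (derivative q)) (eval s (derivative (derivative q))) m (q.eval t₀)
    · linarith
    · linarith
    · exact hKpos
    · have : K - ((n:ℝ) - 1) = dnm := by rw [hK, hdnm]; ring
      linear_combination c2 * this + hc2K
    · exact hc2nn
    · exact hssq
    · exact hodes
    · exact hcrit
    · rw [hm, hg₂]
    · exact hmq
    · exact hp₀neg
    · exact hp₀min s hsIcc
  -- conclude
  set g₁ : ℝ → ℝ := fun t => eval t q + c1 * (eval t q - t * eval t (derivative q)) with hg₁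
  have hbdd : BddBelow (g₁ '' Set.Icc (-1:ℝ) 1) :=
    (isCompact_Icc.image (cont c1)).bddBelow
  have h1le : sInf (g₁ '' Set.Icc (-1:ℝ) 1) ≤ g₁ s :=
    csInf_le hbdd (Set.mem_image_of_mem g₁ hsIcc)
  have h2eq : sInf (g₂ '' Set.Icc (-1:ℝ) 1) = m := by
    apply le_antisymm
    · rw [hm]
      exact csInf_le (isCompact_Icc.image (cont c2)).bddBelow (Set.mem_image_of_mem g₂ hsIcc)
    · apply le_csInf (Set.Nonempty.image _ (Set.nonempty_Icc.2 (by norm_num)))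
      rintro b ⟨t, ht, rfl⟩
      exact hminle t ht
  have hg1s : g₁ s = m + (1/dnm) * (eval s q - s * eval s (derivative q)) := by
    rw [hg₁, hm, hg₂]
    simp only
    rw [hδ]
    ring
  calc sInf (g₁ '' Set.Icc (-1:ℝ) 1) ≤ g₁ s := h1le
    _ < m := by
      rw [hg1s]
      have := mul_neg_of_pos_of_neg hδpos hA
      linarith
    _ = sInf (g₂ '' Set.Icc (-1:ℝ) 1) := h2eq.symm
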